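/- Consider the 3-colouring of the complete graph on vertex set V = V_0 ∪ V_1 ∪ V_2 (disjoint classes of equal size n/3) where an edge xy with x ∈ V_i, y ∈ V_j (i possibly equal to j) is coloured i if i = j or i ≡ j+1 (mod 3), and coloured j otherwise. Then for every colour c ∈ {0,1,2} and every subset S ⊆ V, the set of vertices strongly c-dominated by S has size at most 2n/3. -/
import Mathlib


/-- Kierstead's construction: with three equal classes given by
`part : V → Fin 3` and colouring `col x y = part x` if `part x = part y` or
`part x = part y + 1`, else `part y`, every set `S` strongly `c`-dominates at
most `2n/3` vertices, for every colour `c`. -/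
theorem stmt_7 {V : Type*} [Fintype V] [DecidableEq V]
    (n : ℕ) (hn : Fintype.card V = n)
    (part : V → Fin 3)
    (hsize : ∀ i : Fin 3, 3 * {v : V | part v = i}.ncard = n)
    (col : V → V → Fin 3)
    (hcol : ∀ x y : V, col x y =
      if part x = part y then part x
      else if part x = part y + 1 then part x else part y) :
    ∀ c : Fin 3, ∀ S : Set V,
      3 * {v : V | ∃ s ∈ S, s ≠ v ∧ col s v = c}.ncard ≤ 2 * n := by
  intro c S
  have hsub : {v : V | ∃ s ∈ S, s ≠ v ∧ col s v = c} ⊆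
      {v : V | part v = c} ∪ {v : V | part v = c + 2} := by
    intro v hv
    obtain ⟨s, -, -, hc⟩ := hv
    rw [hcol s v] at hc
    split_ifs at hc with h1 h2
    · left; show part v = c; rw [← h1, hc]
    · right
      have key : ∀ a b : Fin 3, a = b + 1 → b = a + 2 := by decide
      show part v = c + 2; rw [← hc]; exact key _ _ h2
    · left; exact hc
  have h1 := Set.ncard_le_ncard hsub (Set.toFinite _)
  have h2 := Set.ncard_union_le {v : V | part v = c} {v : V | part v = c + 2}
  have := hsize c
  have := hsize (c + 2)
  omega
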